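/- Let n be an odd positive integer and q = 2^n, and let ∘ denote the symplectic Knuth presemifield multiplication on F_q. Then for every nonzero x ∈ F_q, the set {m ∈ F_q : x ∘ m² + m = 0} has exactly 2 elements. (This expresses that the set of lines {l_{m²,m} : m ∈ F_q} ∪ {l_0, l_∞} is a line hyperoval in the symplectic presemifield plane Π(K_n^{td}).) -/

import Mathlib

/-- Corollary 3.2: in the symplectic Knuth presemifield plane `Π(K_n^{td})`, the set of
lines `{l_{m²,m} : m ∈ F_q} ∪ {l_0, l_∞}` is a line hyperoval.  Analytically: for every
nonzero `x ∈ F_q`, the equation `x ∘ m² + m = 0` has exactly `2` solutions `m ∈ F_q`. -/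
theorem line_hyperoval_standard
    (n : ℕ) (hn : Odd n) (hn0 : 0 < n)
    {F : Type*} [Field F] [Fintype F] (hF : Fintype.card F = 2 ^ n)
    (Tr : F → F) (hTr : ∀ x : F, Tr x = ∑ i ∈ Finset.range n, x ^ 2 ^ i)
    (smul : F → F → F)
    (hsmul : ∀ x y : F, smul x y = x * y + Tr x * y ^ 2 ^ (n - 1) + Tr (x ^ 2 * y)) :
    ∀ x : F, x ≠ 0 → ({m : F | smul x (m ^ 2) + m = 0}).ncard = 2 := by
  -- characteristic 2
  have h2 : (2 : F) = 0 := by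
    have h := FiniteField.cast_card_eq_zero F
    rw [hF] at h
    push_cast at h
    exact pow_eq_zero_iff hn0.ne' |>.mp h
  have hring : ringChar F = 2 := by
    have hd : ringChar F ∣ 2 := ringChar.dvd (by exact_mod_cast h2)
    rcases (Nat.prime_two).eq_one_or_self_of_dvd _ hd with h1 | h1
    · exact absurd h1 (CharP.ringChar_ne_one)
    · exact h1
  haveI : CharP F 2 := hring ▸ ringChar.charP F
  have he : 2 ^ (n - 1) * 2 = 2 ^ n := by
    rw [← pow_succ, Nat.sub_add_cancel hn0]
  -- basic facts
  have hq : ∀ z : F, z ^ 2 ^ n = z := fun z => by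
    rw [← hF]; exact FiniteField.pow_card z
  have hTr0 : Tr 0 = 0 := by
    rw [hTr]
    exact Finset.sum_eq_zero fun i _ => zero_pow (by positivity)
  have hTradd : ∀ a b : F, Tr (a + b) = Tr a + Tr b := by
    intro a b
    rw [hTr, hTr, hTr, ← Finset.sum_add_distrib]
    exact Finset.sum_congr rfl fun i _ => add_pow_char_pow ..
  -- Tr (z^2) = Tr z
  have hTrsq : ∀ z : F, Tr (z ^ 2) = Tr z := by
    intro z
    have key : ∀ i : ℕ, (z ^ 2) ^ 2 ^ i = z ^ 2 ^ (i + 1) := by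
      intro i
      rw [← pow_mul, pow_succ, mul_comm (2 ^ i) 2]
    have h1 := Finset.sum_range_succ' (fun i => z ^ 2 ^ i) n
    have h2' := Finset.sum_range_succ (fun i => z ^ 2 ^ i) n
    rw [hTr, hTr]
    have hkey : (∑ i ∈ Finset.range n, (z ^ 2) ^ 2 ^ i) + z ^ 2 ^ 0
        = (∑ i ∈ Finset.range n, z ^ 2 ^ i) + z ^ 2 ^ n := by
      rw [Finset.sum_congr rfl fun i _ => key i, ← h1, h2']
    rw [hq, pow_zero, pow_one] at hkey
    exact add_right_cancel hkey
  -- Tr z ∈ {0, 1}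
  have hTr01 : ∀ z : F, Tr z = 0 ∨ Tr z = 1 := by
    intro z
    have hsq : Tr z ^ 2 = Tr z := by
      rw [hTr, sum_pow_char]
      have h3 : ∀ i ∈ Finset.range n, (z ^ 2 ^ i) ^ 2 = (z ^ 2) ^ 2 ^ i := by
        intro i _
        rw [← pow_mul, ← pow_mul, mul_comm]
      rw [Finset.sum_congr rfl h3, ← hTr, hTrsq]
      exact hTr z
    have : Tr z * (Tr z + 1) = 0 := by linear_combination hsq + Tr z * h2
    rcases mul_eq_zero.mp this with h | h
    · exact Or.inl h
    · exact Or.inr (by linear_combination h - h2)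
  have hTr1 : Tr 1 = 1 := by
    rw [hTr]
    simp only [one_pow, Finset.sum_const, Finset.card_range, nsmul_eq_mul, mul_one]
    obtain ⟨k, hk⟩ := hn
    rw [hk]; push_cast; linear_combination (k : F) * h2
  -- square root facts
  have hmsq : ∀ m : F, (m ^ 2) ^ 2 ^ (n - 1) = m := by
    intro m
    rw [← pow_mul, mul_comm, he, hq]
  have hsqinj : ∀ a b : F, a ^ 2 = b ^ 2 → a = b := by
    intro a b hab
    have h0 : (a + b) ^ 2 = 0 := by
      rw [add_pow_char, hab]; exact CharTwo.add_self_eq_zero _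
    have h0' : a + b = 0 := pow_eq_zero_iff two_ne_zero |>.mp h0
    linear_combination h0' - b * h2
  -- Artin–Schreier: Tr z = 0 → ∃ u, u*u + u = z
  have hAS : ∀ z : F, Tr z = 0 → ∃ u : F, u * u + u = z := by
    intro z hz
    set T : F →+ F := { toFun := Tr, map_zero' := hTr0, map_add' := hTradd } with hT
    set φ : F →+ F :=
      { toFun := fun u => u * u + u
        map_zero' := by ring
        map_add' := fun a b => by linear_combination (a * b) * h2 } with hφ
    have hkerφ : (φ.ker : Set F) = {0, 1} := by
      ext u
      simp only [SetLike.mem_coe, AddMonoidHom.mem_ker, hφ, AddMonoidHom.coe_mk,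
        ZeroHom.coe_mk, Set.mem_insert_iff, Set.mem_singleton_iff]
      constructor
      · intro hu
        have : u * (u + 1) = 0 := by linear_combination hu
        rcases mul_eq_zero.mp this with h | h
        · exact Or.inl h
        · exact Or.inr (by linear_combination h - h2)
      · rintro (rfl | rfl) <;> [simp; linear_combination h2]
    have hrangeT : (T.range : Set F) = {0, 1} := by
      ext z'
      simp only [SetLike.mem_coe, AddMonoidHom.mem_range, hT, AddMonoidHom.coe_mk,
        ZeroHom.coe_mk, Set.mem_insert_iff, Set.mem_singleton_iff]
      constructor
      · rintro ⟨y, rfl⟩; exact hTr01 y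
      · rintro (rfl | rfl)
        · exact ⟨0, hTr0⟩
        · exact ⟨1, hTr1⟩
    have hcardF : Nat.card F = 2 ^ n := by rw [Nat.card_eq_fintype_card, hF]
    have hc01 : ({0, 1} : Set F).ncard = 2 := Set.ncard_pair zero_ne_one
    have hckerφ : Nat.card φ.ker = 2 := by
      rw [← SetLike.coe_sort_coe, Nat.card_coe_set_eq, hkerφ, hc01]
    have hcrangeT : Nat.card T.range = 2 := by
      rw [← SetLike.coe_sort_coe, Nat.card_coe_set_eq, hrangeT, hc01]
    have hmulφ : Nat.card φ.ker * Nat.card φ.range = 2 ^ n := by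
      rw [← AddSubgroup.index_ker, AddSubgroup.card_mul_index, hcardF]
    have hmulT : Nat.card T.ker * Nat.card T.range = 2 ^ n := by
      rw [← AddSubgroup.index_ker, AddSubgroup.card_mul_index, hcardF]
    have hcrφ : Nat.card φ.range = 2 ^ (n - 1) := by
      rw [hckerφ] at hmulφ
      omega
    have hckT : Nat.card T.ker = 2 ^ (n - 1) := by
      rw [hcrangeT] at hmulT
      omega
    have hsub : (φ.range : Set F) ⊆ (T.ker : Set F) := by
      rintro _ ⟨u, rfl⟩
      simp only [SetLike.mem_coe, AddMonoidHom.mem_ker, hT, hφ, AddMonoidHom.coe_mk,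
        ZeroHom.coe_mk]
      have h3 : Tr (u * u + u) = Tr (u ^ 2) + Tr u := by rw [← hTradd]; ring_nf
      rw [h3, hTrsq]
      exact CharTwo.add_self_eq_zero _
    have hceq : (φ.range : Set F) = (T.ker : Set F) := by
      apply Set.eq_of_subset_of_ncard_le hsub _ (Set.toFinite _)
      rw [← Nat.card_coe_set_eq, ← Nat.card_coe_set_eq, SetLike.coe_sort_coe,
        SetLike.coe_sort_coe, hcrφ, hckT]
    have hz' : z ∈ (T.ker : Set F) := by
      simp only [SetLike.mem_coe, AddMonoidHom.mem_ker, hT, AddMonoidHom.coe_mk,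
        ZeroHom.coe_mk]
      exact hz
    rw [← hceq] at hz'
    obtain ⟨u, hu⟩ := hz'
    exact ⟨u, hu⟩
  -- the simplified equation
  intro x hx
  have heq : ∀ m : F, smul x (m ^ 2) + m
      = x * m ^ 2 + Tr x * m + Tr (x * m) + m := by
    intro m
    rw [hsmul, hmsq]
    have h3 : x ^ 2 * m ^ 2 = (x * m) ^ 2 := by ring
    rw [h3, hTrsq]
  rcases hTr01 x with htx | htx
  · -- Tr x = 0 : solutions are 0 and u/x with u² + u = x, Tr u = 1
    obtain ⟨u, hu⟩ := hAS x htx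
    have hu1 : ∃ u : F, u * u + u = x ∧ Tr u = 1 := by
      rcases hTr01 u with h | h
      · refine ⟨u + 1, by linear_combination hu + (u + 1) * h2, ?_⟩
        rw [hTradd, h, hTr1, zero_add]
      · exact ⟨u, hu, h⟩
    obtain ⟨u, hu, hTu⟩ := hu1
    clear * - h2 hx hTr0 hTr01 hTr1 hTradd htx hu hTu heq
    have hune : u ≠ 0 := by
      rintro rfl; simp at hu; exact hx hu.symm
    set m₀ : F := u * x⁻¹ with hm₀
    have hm₀ne : m₀ ≠ 0 := by
      simp [hm₀, hune, hx]
    have hxm₀ : x * m₀ = u := by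
      rw [hm₀]; field_simp
    have hS : {m : F | smul x (m ^ 2) + m = 0} = {0, m₀} := by
      ext m
      simp only [Set.mem_setOf_eq, Set.mem_insert_iff, Set.mem_singleton_iff]
      rw [heq]
      constructor
      · intro hm
        rcases hTr01 (x * m) with h | h
        · rw [htx, h] at hm
          have : m * (x * m + 1) = 0 := by linear_combination hm
          rcases mul_eq_zero.mp this with h' | h'
          · exact Or.inl h'
          · exfalso
            have hxm1 : x * m = 1 := by linear_combination h' - h2
            rw [hxm1, hTr1] at h
            exact one_ne_zero h
        · rw [htx, h] at hm
          have hv : (x * m) * (x * m) + (x * m) = x := by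
            have : x * (x * m ^ 2 + 0 * m + 1 + m) = 0 := by rw [hm, mul_zero]
            linear_combination this - x * h2
          have hdiff : ((x * m) + u) * ((x * m) + u + 1) = 0 := by
            linear_combination hv + hu + (x * m * u + x) * h2
          rcases mul_eq_zero.mp hdiff with h' | h'
          · right
            have hxmu : x * m = u := by linear_combination h' - u * h2
            rw [hm₀]
            field_simp
            linear_combination hxmu
          · exfalso
            have hvu : x * m = u + 1 := by linear_combination h' - (u + 1) * h2
            rw [hvu, hTradd, hTu, hTr1] at h
            have h4 : (2 : F) = 1 := by linear_combination h
            rw [h2] at h4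
            exact one_ne_zero h4.symm
      · rintro (rfl | rfl)
        · simp only [mul_zero, hTr0]
          ring
        · rw [hxm₀, hTu, htx]
          have h1 : x * (x * m₀ ^ 2 + 0 * m₀ + 1 + m₀) = 0 := by
            have h5 : x * (x * m₀ ^ 2 + 0 * m₀ + 1 + m₀)
                = (x * m₀) * (x * m₀) + (x * m₀) + x := by ring
            rw [h5, hxm₀, hu]
            exact CharTwo.add_self_eq_zero x
          exact (mul_eq_zero.mp h1).resolve_left hx
    rw [hS]
    exact Set.ncard_pair (Ne.symm hm₀ne)
  · -- Tr x = 1 : solutions are 0 and the square root of x⁻¹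
    set r : F := x⁻¹ ^ 2 ^ (n - 1) with hr
    have hr2 : r ^ 2 = x⁻¹ := by
      rw [hr, ← pow_mul, he, hq]
    have hrne : r ≠ 0 := by
      intro h
      rw [h] at hr2
      simp at hr2
      exact hx hr2.symm
    have hTxr : Tr (x * r) = 1 := by
      have hxr2 : (x * r) ^ 2 = x := by
        rw [mul_pow, hr2]
        field_simp
      rw [← hTrsq (x * r), hxr2, htx]
    have hS : {m : F | smul x (m ^ 2) + m = 0} = {0, r} := by
      ext m
      simp only [Set.mem_setOf_eq, Set.mem_insert_iff, Set.mem_singleton_iff]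
      rw [heq]
      constructor
      · intro hm
        rcases hTr01 (x * m) with h | h
        · rw [htx, h] at hm
          have : x * m ^ 2 = 0 := by linear_combination hm - m * h2
          rcases mul_eq_zero.mp this with h' | h'
          · exact absurd h' hx
          · exact Or.inl (pow_eq_zero_iff two_ne_zero |>.mp h')
        · rw [htx, h] at hm
          right
          have hxm2 : x * m ^ 2 = 1 := by linear_combination hm - m * h2 - h2
          have hmx : m ^ 2 = x⁻¹ := by field_simp; linear_combination hxm2
          exact hsqinj m r (by rw [hmx, hr2])
      · rintro (rfl | rfl)
        · simp only [mul_zero, hTr0]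
          ring
        · rw [hr2, hTxr, htx, mul_inv_cancel₀ hx]
          linear_combination (1 + r) * h2
    rw [hS]
    exact Set.ncard_pair (Ne.symm hrne)
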